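/- Let U ⊆ ℂ be an open connected set containing the real line and let f : ℂ → ℂ be analytic on U, with f(t) real and f(t) ≥ 0 for every real t, and f not identically zero on ℝ. Let H be a normed vector space and g : ℝ → H a continuous function such that the Lebesgue integral of the nonnegative function t ↦ ‖g(t)‖² f(t) over ℝ equals 0. Then g(t) = 0 for every t ∈ ℝ. -/

import Mathlib

open Filter MeasureTheory Topology

/-- Let `U ⊆ ℂ` be an open connected set containing the real line, `f : ℂ → ℂ`
analytic on `U`, real-valued and nonnegative on `ℝ` and not identically zero on `ℝ`.
Let `H` be a normed vector space and `g : ℝ → H` continuous with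
`∫⁻ ‖g t‖² f t dt = 0`.  Then `g ≡ 0`. -/
theorem stmt_6 {H : Type*} [NormedAddCommGroup H] [NormedSpace ℝ H]
    (U : Set ℂ) (hU : IsOpen U) (hUconn : IsConnected U)
    (hreal : ∀ t : ℝ, (t : ℂ) ∈ U)
    (f : ℂ → ℂ) (hf : AnalyticOnNhd ℂ f U)
    (hfreal : ∀ t : ℝ, (f t).im = 0)
    (hfpos : ∀ t : ℝ, 0 ≤ (f t).re)
    (hfne : ∃ t : ℝ, f t ≠ 0)
    (g : ℝ → H) (hg : Continuous g)
    (hint : ∫⁻ t : ℝ, ENNReal.ofReal (‖g t‖ ^ 2 * (f t).re) = 0) :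
    ∀ t : ℝ, g t = 0 := by
  -- continuity of f on ℝ
  have hfc : Continuous fun t : ℝ => f t :=
    continuous_iff_continuousAt.2 fun t =>
      ((hf _ (hreal t)).continuousAt).comp Complex.continuous_ofReal.continuousAt
  have hmeas : Measurable fun t : ℝ => ENNReal.ofReal (‖g t‖ ^ 2 * (f t).re) := by
    apply Measurable.ennreal_ofReal
    exact (((hg.norm.pow 2).mul (Complex.continuous_re.comp hfc))).measurable
  have hae : ∀ᵐ t : ℝ, ENNReal.ofReal (‖g t‖ ^ 2 * (f t).re) = 0 :=
    (lintegral_eq_zero_iff hmeas).1 hint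
  have hae' : ∀ᵐ t : ℝ, ‖g t‖ ^ 2 * (f t).re = 0 := by
    filter_upwards [hae] with t ht
    have h1 : 0 ≤ ‖g t‖ ^ 2 * (f t).re := mul_nonneg (by positivity) (hfpos t)
    have := (ENNReal.ofReal_eq_zero).1 ht
    linarith
  by_contra hcon
  push_neg at hcon
  obtain ⟨t₀, ht₀⟩ := hcon
  -- find an interval around t₀ where g ≠ 0
  have hpos : 0 < ‖g t₀‖ := norm_pos_iff.2 ht₀
  obtain ⟨δ, hδ, hball⟩ := Metric.continuousAt_iff.1 hg.continuousAt (‖g t₀‖) hpos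
  have hgI : ∀ t ∈ Set.Ioo (t₀ - δ) (t₀ + δ), g t ≠ 0 := by
    intro t ht h0
    have hd : dist t t₀ < δ := by
      rw [Real.dist_eq, abs_lt]; constructor <;> [linarith [ht.1]; linarith [ht.2]]
    have := hball hd
    rw [h0, dist_zero_left] at this
    exact absurd this (lt_irrefl _)
  -- a.e. on the interval, f = 0
  set S : Set ℝ := {t | f t = 0}
  have hIae : ∀ᵐ t : ℝ, t ∈ Set.Ioo (t₀ - δ) (t₀ + δ) → t ∈ S := by
    filter_upwards [hae'] with t ht htI
    have hgne : ‖g t‖ ^ 2 ≠ 0 := by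
      exact pow_ne_zero _ (norm_ne_zero_iff.2 (hgI t htI))
    have hre : (f t).re = 0 := by
      rcases mul_eq_zero.1 ht with h | h
      · exact absurd h hgne
      · exact h
    exact Complex.ext hre (hfreal t)
  have hμ : (volume (Set.Ioo (t₀ - δ) (t₀ + δ) ∩ S)) ≠ 0 := by
    intro h0
    have h1 : volume (Set.Ioo (t₀ - δ) (t₀ + δ) \ S) = 0 := by
      have h := hIae
      rw [MeasureTheory.ae_iff] at h
      refine measure_mono_null ?_ h
      intro y hy
      simp only [Set.mem_setOf_eq]
      push_neg
      exact ⟨hy.1, hy.2⟩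
    have h2 : volume (Set.Ioo (t₀ - δ) (t₀ + δ)) = 0 := by
      have := measure_union_le (μ := volume) (Set.Ioo (t₀ - δ) (t₀ + δ) ∩ S)
        (Set.Ioo (t₀ - δ) (t₀ + δ) \ S)
      rw [Set.inter_union_diff] at this
      simpa [h0, h1] using this
    rw [Real.volume_Ioo] at h2
    have : t₀ + δ - (t₀ - δ) = 2 * δ := by ring
    rw [this] at h2
    have : (0:ℝ) < 2 * δ := by linarith
    simp [ENNReal.ofReal_eq_zero, not_le.2 this] at h2
    linarith
  -- the set is infinite, so has an accumulation point
  have hinf : (Set.Ioo (t₀ - δ) (t₀ + δ) ∩ S).Infinite := by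
    intro hfin
    exact hμ (hfin.measure_zero _)
  obtain ⟨x, -, hx⟩ := hinf.exists_accPt_of_subset_isCompact isCompact_Icc
    ((Set.inter_subset_left).trans Set.Ioo_subset_Icc_self)
  have hfreq : ∃ᶠ y : ℝ in 𝓝[≠] x, f y = 0 := by
    have h := accPt_iff_frequently.1 hx
    rw [frequently_nhdsWithin_iff]
    exact h.mono fun y hy => ⟨hy.2.2, hy.1⟩
  -- transport to ℂ
  have htend : Tendsto (fun t : ℝ => (t : ℂ)) (𝓝[≠] x) (𝓝[≠] (x : ℂ)) := by
    apply Complex.continuous_ofReal.continuousWithinAt.tendsto_nhdsWithin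
    intro y hy h
    apply hy
    simp only [Set.mem_singleton_iff] at h ⊢
    exact_mod_cast h
  have hfreqC : ∃ᶠ z in 𝓝[≠] (x : ℂ), f z = 0 := htend.frequently hfreq
  have heq : Set.EqOn f 0 U :=
    hf.eqOn_zero_of_preconnected_of_frequently_eq_zero hUconn.isPreconnected (hreal x) hfreqC
  obtain ⟨t, ht⟩ := hfne
  exact ht (heq (hreal t))
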